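/- Let 0 ≤ α ≤ 652 and let Q(x,y) = (x⁴−y⁴)^α(x⁸+14x⁴y⁴+y⁸) as a polynomial in x,y over the rationals. If the coefficient of (x⁴)^{α+2−i}(−y⁴)^i in Q vanishes for some i with 0 ≤ i ≤ (α+2)/2, then (α, i) = (14, 1) or (α, i) = (223, 15). -/
import Mathlib


open MvPolynomial Finset

noncomputable abbrev Qpoly (α : ℕ) : MvPolynomial (Fin 2) ℚ :=
  ((X 0)^4 - (X 1)^4)^α * ((X 0)^8 + 14 * (X 0)^4 * (X 1)^4 + (X 1)^8)

lemma single_eq_iff (a b c d : ℕ) :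
    (Finsupp.single (0 : Fin 2) c + Finsupp.single (1 : Fin 2) d
      = Finsupp.single (0 : Fin 2) a + Finsupp.single (1 : Fin 2) b) ↔ (c = a ∧ d = b) := by
  constructor
  · intro h
    constructor
    · have := DFunLike.congr_fun h 0
      simpa [Finsupp.single_apply] using this
    · have := DFunLike.congr_fun h 1
      simpa [Finsupp.single_apply] using this
  · rintro ⟨rfl, rfl⟩; rfl

lemma coeff_term (q : ℚ) (a b c d : ℕ) :
    MvPolynomial.coeff (Finsupp.single (0 : Fin 2) a + Finsupp.single (1 : Fin 2) b)
      (MvPolynomial.C q * (X (0 : Fin 2))^c * (X 1)^d)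
    = if c = a ∧ d = b then q else 0 := by
  rw [mul_assoc, X_pow_eq_monomial, X_pow_eq_monomial, monomial_mul, one_mul,
    C_mul_monomial, mul_one, coeff_monomial]
  by_cases h : c = a ∧ d = b
  · rw [if_pos ((single_eq_iff a b c d).mpr h), if_pos h]
  · rw [if_neg (fun hc => h ((single_eq_iff a b c d).mp hc)), if_neg h]

lemma Qpoly_eq (α : ℕ) : Qpoly α = ∑ j ∈ range (α+1),
    (MvPolynomial.C ((-1:ℚ)^(α-j) * (α.choose j)) * (X (0:Fin 2))^(4*j+8) * (X 1)^(4*(α-j))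
    + MvPolynomial.C ((-1:ℚ)^(α-j) * (α.choose j) * 14) * (X 0)^(4*j+4) * (X 1)^(4*(α-j)+4)
    + MvPolynomial.C ((-1:ℚ)^(α-j) * (α.choose j)) * (X 0)^(4*j) * (X 1)^(4*(α-j)+8)) := by
  rw [Qpoly, sub_eq_add_neg, add_pow, sum_mul]
  refine Finset.sum_congr rfl fun j hj => ?_
  simp only [map_mul, map_pow, map_neg, map_one, map_natCast, map_ofNat]
  ring

lemma collapse (α a b j1 j2 j3 : ℕ)
    (hc1 : ∀ j < α+1, ((4*j+8 = a ∧ 4*(α-j) = b) ↔ j = j1))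
    (hc2 : ∀ j < α+1, ((4*j+4 = a ∧ 4*(α-j)+4 = b) ↔ j = j2))
    (hc3 : ∀ j < α+1, ((4*j = a ∧ 4*(α-j)+8 = b) ↔ j = j3)) :
    MvPolynomial.coeff (Finsupp.single (0 : Fin 2) a + Finsupp.single (1 : Fin 2) b) (Qpoly α)
    = (if j1 < α+1 then (-1:ℚ)^(α-j1) * (α.choose j1) else 0)
      + (if j2 < α+1 then (-1:ℚ)^(α-j2) * (α.choose j2) * 14 else 0)
      + (if j3 < α+1 then (-1:ℚ)^(α-j3) * (α.choose j3) else 0) := by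
  rw [Qpoly_eq, MvPolynomial.coeff_sum]
  simp only [coeff_add, coeff_term]
  have : ∀ j ∈ range (α+1),
      ((if 4*j+8 = a ∧ 4*(α-j) = b then (-1:ℚ)^(α-j) * (α.choose j) else 0)
      + (if 4*j+4 = a ∧ 4*(α-j)+4 = b then (-1:ℚ)^(α-j) * (α.choose j) * 14 else 0)
      + (if 4*j = a ∧ 4*(α-j)+8 = b then (-1:ℚ)^(α-j) * (α.choose j) else 0))
      = ((if j = j1 then (-1:ℚ)^(α-j) * (α.choose j) else 0)
      + (if j = j2 then (-1:ℚ)^(α-j) * (α.choose j) * 14 else 0)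
      + (if j = j3 then (-1:ℚ)^(α-j) * (α.choose j) else 0)) := by
    intro j hj
    rw [mem_range] at hj
    rw [if_congr (hc1 j hj) rfl rfl, if_congr (hc2 j hj) rfl rfl, if_congr (hc3 j hj) rfl rfl]
  rw [Finset.sum_congr rfl this, Finset.sum_add_distrib, Finset.sum_add_distrib,
    Finset.sum_ite_eq' (range (α+1)) j1, Finset.sum_ite_eq' (range (α+1)) j2,
    Finset.sum_ite_eq' (range (α+1)) j3]
  simp only [mem_range]

lemma coeff_Q0 (α : ℕ) :
    MvPolynomial.coeff (Finsupp.single (0 : Fin 2) (4*(α+2-0)) + Finsupp.single (1 : Fin 2) (4*0))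
      (Qpoly α) = 1 := by
  rw [collapse α _ _ α (α+1) (α+2) (by intro j hj; omega) (by intro j hj; omega)
    (by intro j hj; omega)]
  rw [if_pos (by omega), if_neg (by omega), if_neg (by omega)]
  simp

lemma coeff_Q10 :
    MvPolynomial.coeff (Finsupp.single (0 : Fin 2) (4*(0+2-1)) + Finsupp.single (1 : Fin 2) (4*1))
      (Qpoly 0) = 14 := by
  rw [collapse 0 _ _ 5 0 5 (by intro j hj; omega) (by intro j hj; omega)
    (by intro j hj; omega)]
  norm_num

lemma coeff_Q1 (α : ℕ) (h1 : 1 ≤ α) :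
    MvPolynomial.coeff (Finsupp.single (0 : Fin 2) (4*(α+2-1)) + Finsupp.single (1 : Fin 2) (4*1))
      (Qpoly α) = 14 - α := by
  rw [collapse α _ _ (α-1) α (α+2) (by intro j hj; omega) (by intro j hj; omega)
    (by intro j hj; omega)]
  rw [if_pos (by omega), if_pos (by omega), if_neg (by omega)]
  rw [show α - (α-1) = 1 from by omega, show α - 1 = α - 1 from rfl]
  rw [show α.choose (α-1) = α.choose 1 from by
    conv_lhs => rw [show α - 1 = α - 1 from rfl]
    exact (Nat.choose_symm h1)]
  rw [Nat.choose_one_right, Nat.sub_self, Nat.choose_self]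
  push_cast
  ring

lemma coeff_Q2 (α k : ℕ) (h : k+2 ≤ α) :
    MvPolynomial.coeff
      (Finsupp.single (0 : Fin 2) (4*(α+2-(k+2))) + Finsupp.single (1 : Fin 2) (4*(k+2)))
      (Qpoly α)
    = (-1:ℚ)^k * ((α.choose (k+2) : ℚ) + α.choose k - 14 * α.choose (k+1)) := by
  rw [collapse α _ _ (α-(k+2)) (α-(k+1)) (α-k) (by intro j hj; omega) (by intro j hj; omega)
    (by intro j hj; omega)]
  rw [if_pos (by omega), if_pos (by omega), if_pos (by omega)]
  rw [show α - (α-(k+2)) = k+2 from by omega, show α - (α-(k+1)) = k+1 from by omega,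
    show α - (α-k) = k from by omega,
    Nat.choose_symm h, Nat.choose_symm (by omega : k+1 ≤ α), Nat.choose_symm (by omega : k ≤ α)]
  rw [pow_succ, pow_succ]
  ring



lemma key : ∀ (k : ℕ) (m : ℤ), 1 ≤ k → (k:ℤ) ≤ m →
    m^2 + (k:ℤ)^2 = 14*k*m + 13*m + 13*k + 14 →
    ((k:ℤ) = 14 ∧ m = 209) ∨ (3000:ℤ) ≤ k + m := by
  intro k
  induction k using Nat.strong_induction_on with
  | _ k IH =>
    intro m hk1 hkm hm
    have hk1' : (1:ℤ) ≤ k := by exact_mod_cast hk1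
    have hm1 : (1:ℤ) ≤ m := le_trans hk1' hkm
    have h1 : m*(14*(k:ℤ)+13-m) = ((k:ℤ)-14)*((k:ℤ)+1) := by linear_combination -hm
    rcases lt_trichotomy (k:ℕ) 14 with hk13 | hk14 | hk15
    · exfalso
      have hk13' : (k:ℤ) ≤ 13 := by exact_mod_cast Nat.lt_succ_iff.mp (by omega)
      rcases le_or_gt m (14*(k:ℤ)+13) with hsm | hsm
      · nlinarith [mul_nonneg (by linarith : (0:ℤ) ≤ m) (by linarith : (0:ℤ) ≤ 14*(k:ℤ)+13-m)]
      · nlinarith [mul_nonneg (by linarith : (0:ℤ) ≤ m) (by linarith : (0:ℤ) ≤ m - (14*(k:ℤ)+14))]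
    · left
      have hc : (k:ℤ) = 14 := by exact_mod_cast hk14
      refine ⟨hc, ?_⟩
      rw [hc] at h1 hkm
      have h0 : m * (m - 209) = 0 := by linear_combination -h1
      rcases mul_eq_zero.mp h0 with h | h
      · linarith
      · linarith
    · -- k ≥ 15
      have hk15' : (15:ℤ) ≤ k := by exact_mod_cast hk15
      set t : ℤ := 14*(k:ℤ)+13-m with ht
      have hmt : m * t = ((k:ℤ)-14)*((k:ℤ)+1) := h1
      have ht1 : 1 ≤ t := by nlinarith
      have htk : t < (k:ℤ) := by nlinarith
      -- t satisfies the equation with m replaced by k's role:  (t, k) solution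
      have hteq : (k:ℤ)^2 + t^2 = 14*t*(k:ℤ) + 13*(k:ℤ) + 13*t + 14 := by
        have : t + m = 14*(k:ℤ)+13 := by rw [ht]; ring
        nlinarith [hm, hmt]
      obtain ⟨t', ht'⟩ : ∃ t' : ℕ, t = (t' : ℤ) := ⟨t.toNat, by omega⟩
      rw [ht'] at ht1 htk hteq
      have ht'1 : 1 ≤ t' := by exact_mod_cast ht1
      have ht'k : t' < k := by exact_mod_cast htk
      have := IH t' ht'k (k:ℤ) ht'1 (by exact_mod_cast le_of_lt htk)
        (by linear_combination hteq)
      rcases this with ⟨h14, h209⟩ | hbig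
      · -- t' = 14, k = 209, so m = 14*209+13-14 = 2925
        right
        have hm2925 : m = 2925 := by omega
        omega
      · right
        -- t' + k ≥ 3000, t' < k ≤ m
        have : (k:ℤ) ≤ m := hkm
        omega

lemma binom (k r : ℕ) (h652 : 2*k+2+r ≤ 652)
    (heq : (2*k+2+r).choose (k+2) + (2*k+2+r).choose k = 14 * (2*k+2+r).choose (k+1)) :
    k = 13 ∧ r = 195 := by
  set n := 2*k+2+r with hn
  have e1 : n.choose (k+1) * (k+1) = n.choose k * (k+2+r) := by
    have := Nat.choose_succ_right_eq n k
    rwa [show n - k = k+2+r from by omega] at this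
  have e2 : n.choose (k+2) * (k+2) = n.choose (k+1) * (k+1+r) := by
    have := Nat.choose_succ_right_eq n (k+1)
    rwa [show n - (k+1) = k+1+r from by omega] at this
  have hpos : 0 < n.choose (k+1) := Nat.choose_pos (by omega)
  have e1' : (n.choose (k+1) : ℤ) * ((k:ℤ)+1) = (n.choose k : ℤ) * ((k:ℤ)+2+r) := by
    exact_mod_cast e1
  have e2' : (n.choose (k+2) : ℤ) * ((k:ℤ)+2) = (n.choose (k+1) : ℤ) * ((k:ℤ)+1+r) := by
    exact_mod_cast e2
  have heq' : (n.choose (k+2) : ℤ) + (n.choose k : ℤ) = 14 * (n.choose (k+1) : ℤ) := by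
    exact_mod_cast heq
  have hA : (n.choose (k+1) : ℤ) *
      (((k:ℤ)+1+r)*((k:ℤ)+2+r) + ((k:ℤ)+1)*((k:ℤ)+2) - 14*((k:ℤ)+2)*((k:ℤ)+2+r)) = 0 := by
    linear_combination ((k:ℤ)+2)*((k:ℤ)+2+r)*heq' - ((k:ℤ)+2+r)*e2' + ((k:ℤ)+2)*e1'
  have hA0 : ((k:ℤ)+1+r)*((k:ℤ)+2+r) + ((k:ℤ)+1)*((k:ℤ)+2) - 14*((k:ℤ)+2)*((k:ℤ)+2+r) = 0 := by
    rcases mul_eq_zero.mp hA with h | h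
    · exfalso
      have hne : n.choose (k+1) ≠ 0 := Nat.pos_iff_ne_zero.mp hpos
      have : n.choose (k+1) = 0 := by exact_mod_cast h
      exact hne this
    · exact h
  have hkey := key (k+1) ((k:ℤ)+1+r) (by omega) (by push_cast; omega)
    (by push_cast; linear_combination hA0)
  rcases hkey with ⟨h14, h209⟩ | hbig
  · constructor
    · have : ((k:ℤ)+1) = 14 := by push_cast at h14; linarith
      omega
    · omega
  · exfalso
    push_cast at hbig
    omega

theorem stmt_5 (α i : ℕ) (hα : α ≤ 652) (hi : 2 * i ≤ α + 2)
    (h : MvPolynomial.coeff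
      (Finsupp.single (0 : Fin 2) (4 * (α + 2 - i)) + Finsupp.single (1 : Fin 2) (4 * i))
      (Qpoly α) = 0) :
    (α = 14 ∧ i = 1) ∨ (α = 223 ∧ i = 15) := by
  rcases i with _ | i1
  · rw [coeff_Q0 α] at h
    norm_num at h
  · rcases i1 with _ | k
    · rcases Nat.eq_zero_or_pos α with rfl | hα1
      · rw [coeff_Q10] at h
        norm_num at h
      · rw [coeff_Q1 α hα1] at h
        left
        refine ⟨?_, rfl⟩
        have : (α : ℚ) = 14 := by linarith
        exact_mod_cast this
    · have hk2 : k + 2 ≤ α := by omega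
      rw [coeff_Q2 α k hk2] at h
      have hne : ((-1:ℚ)^k) ≠ 0 := pow_ne_zero _ (by norm_num)
      have h' : (α.choose (k+2) : ℚ) + α.choose k - 14 * α.choose (k+1) = 0 := by
        rcases mul_eq_zero.mp h with h0 | h0
        · exact absurd h0 hne
        · exact h0
      have hQ : (α.choose (k+2) : ℚ) + α.choose k = 14 * α.choose (k+1) := by linarith
      have hN : α.choose (k+2) + α.choose k = 14 * α.choose (k+1) := by exact_mod_cast hQ
      obtain ⟨r, rfl⟩ : ∃ r, α = 2*k+2+r := ⟨α - (2*k+2), by omega⟩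
      obtain ⟨hk, hr⟩ := binom k r (by omega) hN
      right
      subst hk hr
      exact ⟨rfl, rfl⟩
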